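/- Let ν, r, γ be real numbers with γ > 0, ν ≥ 1, r ≥ 0. Let σ := !![0, 1; -1, 0] (the 2×2 symplectic form), Γ := diag(ν·exp(2r), ν·exp(−2r)), K := −γ·I + 2γ·Γ⁻¹, and M^Bayes := 2γ·I + i·(K·σ + σ·Kᵀ), regarded as a 2×2 complex matrix. Then M^Bayes is positive semidefinite if and only if cosh(2r) ≤ ν. Equivalently, the fixed-diffusion Bayes reverse generator violates complete positivity exactly when cosh(2r) > ν. -/

import Mathlib

open Matrix Complex
open scoped ComplexOrder

/-- The one-mode symplectic form in HHW conventions, as a complex matrix. -/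
noncomputable def symp : Matrix (Fin 2) (Fin 2) ℂ := !![0, 1; -1, 0]

/-- Squeezed-thermal reference covariance `diag(ν e^{2r}, ν e^{-2r})`, as a complex matrix. -/
noncomputable def Gam (ν r : ℝ) : Matrix (Fin 2) (Fin 2) ℂ :=
  Matrix.diagonal ![((ν * Real.exp (2 * r) : ℝ) : ℂ), ((ν * Real.exp (-(2 * r)) : ℝ) : ℂ)]

/-- Bayes reverse drift `K = -γ I + 2γ Γ⁻¹`. -/
noncomputable def Kbayes (ν r γ : ℝ) : Matrix (Fin 2) (Fin 2) ℂ :=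
  (-(γ : ℂ)) • (1 : Matrix (Fin 2) (Fin 2) ℂ) + ((2 * γ : ℝ) : ℂ) • (Gam ν r)⁻¹

/-- Generator CP matrix of the Bayes reverse candidate:
`M = 2γ I + i (K σ + σ Kᵀ)`. -/
noncomputable def MBayes (ν r γ : ℝ) : Matrix (Fin 2) (Fin 2) ℂ :=
  ((2 * γ : ℝ) : ℂ) • (1 : Matrix (Fin 2) (Fin 2) ℂ) +
    Complex.I • (Kbayes ν r γ * symp + symp * (Kbayes ν r γ)ᵀ)

lemma gam_inv (ν r : ℝ) (hν : ν ≠ 0) :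
    (Gam ν r)⁻¹ = Matrix.diagonal ![(((ν * Real.exp (2 * r))⁻¹ : ℝ) : ℂ),
      (((ν * Real.exp (-(2 * r)))⁻¹ : ℝ) : ℂ)] := by
  apply Matrix.inv_eq_right_inv
  have h1 : (((ν * Real.exp (2 * r) : ℝ)) : ℂ) ≠ 0 := by
    exact_mod_cast Complex.ofReal_ne_zero.mpr (mul_ne_zero hν (Real.exp_ne_zero _))
  have h2 : (((ν * Real.exp (-(2 * r)) : ℝ)) : ℂ) ≠ 0 := by
    exact_mod_cast Complex.ofReal_ne_zero.mpr (mul_ne_zero hν (Real.exp_ne_zero _))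
  rw [Gam]
  ext i j
  fin_cases i <;> fin_cases j <;>
    simp [Matrix.diagonal_apply, Matrix.one_apply, Complex.ofReal_inv] <;>
    (field_simp; try ring)
lemma kbayes_eq (ν r γ : ℝ) (hν : ν ≠ 0) :
    Kbayes ν r γ = !![((-γ + 2 * γ * (ν * Real.exp (2 * r))⁻¹ : ℝ) : ℂ), 0;
      0, ((-γ + 2 * γ * (ν * Real.exp (-(2 * r)))⁻¹ : ℝ) : ℂ)] := by
  rw [Kbayes, gam_inv ν r hν]
  ext i j
  fin_cases i <;> fin_cases j <;>
    (simp [Matrix.one_apply, Matrix.diagonal]; try (push_cast; ring))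

lemma scal (ν r γ : ℝ) (hν : ν ≠ 0) :
    (-γ + 2 * γ * (ν * Real.exp (2 * r))⁻¹) + (-γ + 2 * γ * (ν * Real.exp (-(2 * r)))⁻¹)
      = 2 * γ * (2 * Real.cosh (2 * r) / ν - 1) := by
  rw [Real.cosh_eq]
  have h1 : Real.exp (2 * r) ≠ 0 := Real.exp_ne_zero _
  have h3 : Real.exp (-(2 * r)) = (Real.exp (2 * r))⁻¹ := by
    rw [← Real.exp_neg]
  rw [h3]
  field_simp
  ring

lemma mbayes_eq (ν r γ : ℝ) (hν : ν ≠ 0) :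
    MBayes ν r γ = !![((2 * γ : ℝ) : ℂ),
        Complex.I * ((2 * γ * (2 * Real.cosh (2 * r) / ν - 1) : ℝ) : ℂ);
      -(Complex.I * ((2 * γ * (2 * Real.cosh (2 * r) / ν - 1) : ℝ) : ℂ)), ((2 * γ : ℝ) : ℂ)] := by
  rw [MBayes, kbayes_eq ν r γ hν, symp]
  rw [show (!![((-γ + 2 * γ * (ν * Real.exp (2 * r))⁻¹ : ℝ) : ℂ), 0;
      0, ((-γ + 2 * γ * (ν * Real.exp (-(2 * r)))⁻¹ : ℝ) : ℂ)])ᵀ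
      = !![((-γ + 2 * γ * (ν * Real.exp (2 * r))⁻¹ : ℝ) : ℂ), 0;
      0, ((-γ + 2 * γ * (ν * Real.exp (-(2 * r)))⁻¹ : ℝ) : ℂ)] from by
    ext i j; fin_cases i <;> fin_cases j <;> simp]
  have hs' : ((((-γ + 2 * γ * (ν * Real.exp (2 * r))⁻¹ : ℝ)) : ℂ))
      + (((-γ + 2 * γ * (ν * Real.exp (-(2 * r)))⁻¹ : ℝ)) : ℂ)
      = (((2 * γ * (2 * Real.cosh (2 * r) / ν - 1) : ℝ)) : ℂ) := by
    exact_mod_cast congrArg (Complex.ofReal) (scal ν r γ hν)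
  ext i j
  fin_cases i <;> fin_cases j <;>
    (simp [Matrix.mul_apply, Fin.sum_univ_two, Matrix.one_apply, Matrix.transpose_apply];
     try (push_cast at hs' ⊢;
          first
            | linear_combination hs'
            | linear_combination Complex.I * hs'
            | linear_combination -Complex.I * hs'))


/-- No-go theorem: the fixed-diffusion Bayes reverse generator is completely positive
(equivalently `M^Bayes ⪰ 0`) iff `cosh(2r) ≤ ν`. -/
theorem bayes_generator_posSemidef_iff (ν r γ : ℝ) (hγ : 0 < γ) (hν : 1 ≤ ν) (hr : 0 ≤ r) :
    (MBayes ν r γ).PosSemidef ↔ Real.cosh (2 * r) ≤ ν := by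
  have hν0 : ν ≠ 0 := by positivity
  have hνpos : (0:ℝ) < ν := by positivity
  obtain ⟨s, hs_def⟩ : ∃ s : ℝ, s = 2 * γ * (2 * Real.cosh (2 * r) / ν - 1) := ⟨_, rfl⟩
  have hM := mbayes_eq ν r γ hν0
  rw [← hs_def] at hM
  rw [Matrix.posSemidef_iff_dotProduct_mulVec]
  constructor
  · rintro ⟨_, hquad⟩
    have h := hquad ![1, Complex.I]
    rw [hM] at h
    have hval : dotProduct (star ![1, Complex.I])
        ((!![((2 * γ : ℝ) : ℂ), Complex.I * ((s : ℝ) : ℂ);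
          -(Complex.I * ((s : ℝ) : ℂ)), ((2 * γ : ℝ) : ℂ)]) *ᵥ ![1, Complex.I])
        = (((4 * γ - 2 * s : ℝ)) : ℂ) := by
      simp [dotProduct, Matrix.mulVec, Fin.sum_univ_two]
      push_cast
      ring_nf
      simp [Complex.I_sq]
      ring
    rw [hval] at h
    have h2 : (0:ℝ) ≤ 4 * γ - 2 * s := by exact_mod_cast h
    -- s ≤ 2γ gives 2 cosh/ν - 1 ≤ 1, i.e. cosh ≤ ν
    have hs2 : s ≤ 2 * γ := by linarith
    rw [hs_def] at hs2
    have : 2 * Real.cosh (2 * r) / ν - 1 ≤ 1 := by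
      by_contra hcon
      push_neg at hcon
      nlinarith
    have := (div_le_iff₀ hνpos).mp (by linarith : 2 * Real.cosh (2 * r) / ν ≤ 2)
    linarith
  · intro hcosh
    have hcosh1 : (1:ℝ) ≤ Real.cosh (2 * r) := Real.one_le_cosh _
    have hs_ub : s ≤ 2 * γ := by
      rw [hs_def]
      have : 2 * Real.cosh (2 * r) / ν ≤ 2 := by
        rw [div_le_iff₀ hνpos]; linarith
      nlinarith
    have hs_lb : -(2 * γ) ≤ s := by
      rw [hs_def]
      have : 0 < 2 * Real.cosh (2 * r) / ν := by positivity
      nlinarith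
    rw [hM]
    constructor
    · ext i j
      fin_cases i <;> fin_cases j <;>
        simp [Matrix.conjTranspose_apply]
    · intro x
      have hexp : dotProduct (star x)
          ((!![((2 * γ : ℝ) : ℂ), Complex.I * ((s : ℝ) : ℂ);
            -(Complex.I * ((s : ℝ) : ℂ)), ((2 * γ : ℝ) : ℂ)]) *ᵥ x)
          = (((2 * γ * ((x 0).re*(x 0).re + (x 0).im*(x 0).im + (x 1).re*(x 1).re + (x 1).im*(x 1).im)
              - 2 * s * ((x 0).re * (x 1).im - (x 0).im * (x 1).re) : ℝ)) : ℂ) := by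
        simp [dotProduct, Matrix.mulVec, Fin.sum_univ_two, Complex.ext_iff,
          Complex.mul_re, Complex.mul_im, Complex.add_re, Complex.add_im]
        constructor <;> ring
      rw [hexp]
      rw [Complex.zero_le_real]
      set p := (x 0).re; set q := (x 0).im; set u := (x 1).re; set v := (x 1).im
      nlinarith [mul_nonneg (by linarith : (0:ℝ) ≤ 2*γ - s) (sq_nonneg (p - v)),
        mul_nonneg (by linarith : (0:ℝ) ≤ 2*γ + s) (sq_nonneg (p + v)),
        mul_nonneg (by linarith : (0:ℝ) ≤ 2*γ - s) (sq_nonneg (q + u)),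
        mul_nonneg (by linarith : (0:ℝ) ≤ 2*γ + s) (sq_nonneg (q - u))]
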